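/- Let H be an n×n Hermitian positive-semidefinite complex matrix and ψ₀ a vector with H.mulVec ψ₀ = 0. Let m₁ be a real number with |m₁| ≤ 1 and m₂ ≥ 0 a real number. Let X = !![0,1;1,0] and Z = !![1,0;0,−1] be the 2×2 Pauli matrices over ℂ, and define the 2n×2n matrix M = (1 + m₁ • X) ⊗ₖ H + m₂ • ((1 − Z) ⊗ₖ 1), where ⊗ₖ is the Kronecker product and 1 denotes the identity matrix of the appropriate size. Then M is positive semidefinite, and M.mulVec v = 0 where v is the vector v(i,j) = (if i = 0 then ψ₀(j) else 0) (i.e. v = e₀ ⊗ ψ₀). -/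
import Mathlib
open Matrix Finset
open scoped Kronecker

noncomputable def cinner {ι : Type*} [Fintype ι] (v w : ι → ℂ) : ℂ :=
  ∑ i, (starRingEnd ℂ) (v i) * w i

private lemma key_expand {n : ℕ} (H : Matrix (Fin n) (Fin n) ℂ) (m₁ m₂ : ℝ)
    (u : Fin 2 × Fin n → ℂ) :
    cinner u (((1 + (m₁ : ℂ) • !![0, 1; 1, 0]) ⊗ₖ H +
        (m₂ : ℂ) • ((1 - !![1, 0; 0, -1]) ⊗ₖ (1 : Matrix (Fin n) (Fin n) ℂ))).mulVec u)
      = cinner (fun j => u (0,j)) (H.mulVec (fun j => u (0,j)))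
      + cinner (fun j => u (1,j)) (H.mulVec (fun j => u (1,j)))
      + (m₁:ℂ) * (cinner (fun j => u (0,j)) (H.mulVec (fun j => u (1,j)))
                + cinner (fun j => u (1,j)) (H.mulVec (fun j => u (0,j))))
      + 2 * (m₂:ℂ) * cinner (fun j => u (1,j)) (fun j => u (1,j)) := by
  simp only [cinner, mulVec, dotProduct, Fintype.sum_prod_type, Fin.sum_univ_two,
    Matrix.add_apply, Matrix.smul_apply, kroneckerMap_apply, Matrix.one_apply,
    Matrix.sub_apply, Matrix.cons_val', Matrix.cons_val_zero, Matrix.cons_val_one,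
    Matrix.head_cons, Matrix.empty_val', Matrix.cons_val_fin_one, Matrix.head_fin_const,
    smul_eq_mul, Matrix.of_apply]
  simp only [Finset.mul_sum, Finset.sum_add_distrib, mul_add, add_mul]
  norm_num
  ring_nf
  simp only [mul_comm, mul_left_comm, mul_assoc]
  ring

private lemma bilin_expand {n : ℕ} (H : Matrix (Fin n) (Fin n) ℂ) (s : ℂ) (a b : Fin n → ℂ) :
    cinner (fun j => a j + s * b j) (H.mulVec (fun j => a j + s * b j))
      = cinner a (H.mulVec a) + (starRingEnd ℂ s) * s * cinner b (H.mulVec b)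
      + s * cinner a (H.mulVec b) + (starRingEnd ℂ s) * cinner b (H.mulVec a) := by
  simp only [cinner, mulVec, dotProduct, map_add, _root_.map_mul, mul_add, add_mul,
    Finset.sum_add_distrib, Finset.mul_sum]
  ring_nf
  simp only [mul_comm, mul_left_comm, mul_assoc]
  ring

private lemma cinner_self_re_nonneg {n : ℕ} (w : Fin n → ℂ) : 0 ≤ (cinner w w).re := by
  have h : cinner w w = ∑ j, (Complex.normSq (w j) : ℂ) := by
    simp [cinner, Complex.normSq_eq_conj_mul_self]
  rw [h, Complex.re_sum]
  exact Finset.sum_nonneg fun j _ => by simp [Complex.normSq_nonneg]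

theorem warmup_patch_hamiltonian_psd_kernel {n : ℕ}
    (H : Matrix (Fin n) (Fin n) ℂ) (hHerm : H.IsHermitian)
    (hPSD : ∀ v : Fin n → ℂ, 0 ≤ (cinner v (H.mulVec v)).re)
    (ψ₀ : Fin n → ℂ) (hker : H.mulVec ψ₀ = 0)
    (m₁ m₂ : ℝ) (hm₁ : |m₁| ≤ 1) (hm₂ : 0 ≤ m₂)
    (X Z : Matrix (Fin 2) (Fin 2) ℂ)
    (hX : X = !![0, 1; 1, 0]) (hZ : Z = !![1, 0; 0, -1])
    (M : Matrix (Fin 2 × Fin n) (Fin 2 × Fin n) ℂ)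
    (hM : M = (1 + (m₁ : ℂ) • X) ⊗ₖ H +
        (m₂ : ℂ) • ((1 - Z) ⊗ₖ (1 : Matrix (Fin n) (Fin n) ℂ)))
    (v : Fin 2 × Fin n → ℂ) (hv : v = fun p => if p.1 = 0 then ψ₀ p.2 else 0) :
    (∀ u : Fin 2 × Fin n → ℂ, 0 ≤ (cinner u (M.mulVec u)).re) ∧
      M.mulVec v = 0 := by
  subst hX hZ hM hv
  obtain ⟨hm₁l, hm₁r⟩ := abs_le.mp hm₁
  constructor
  · intro u
    rw [key_expand]
    set u₀ : Fin n → ℂ := fun j => u (0, j) with hu₀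
    set u₁ : Fin n → ℂ := fun j => u (1, j) with hu₁
    have hp := hPSD (fun j => u₀ j + (1:ℂ) * u₁ j)
    have hm := hPSD (fun j => u₀ j + (-1:ℂ) * u₁ j)
    rw [bilin_expand H 1 u₀ u₁] at hp
    rw [bilin_expand H (-1) u₀ u₁] at hm
    have hq := cinner_self_re_nonneg u₁
    have h00 := hPSD u₀
    have h11 := hPSD u₁
    set c00 := cinner u₀ (H.mulVec u₀) with hc00
    set c11 := cinner u₁ (H.mulVec u₁) with hc11
    set c01 := cinner u₀ (H.mulVec u₁) with hc01
    set c10 := cinner u₁ (H.mulVec u₀) with hc10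
    set q := cinner u₁ u₁ with hq'
    have hp' : 0 ≤ c00.re + c11.re + c01.re + c10.re := by
      simpa [Complex.add_re] using hp
    have hm' : 0 ≤ c00.re + c11.re - c01.re - c10.re := by
      simp [Complex.add_re, Complex.neg_re] at hm; linarith
    have goal' : ((c00 + c11 + (m₁:ℂ) * (c01 + c10) + 2 * (m₂:ℂ) * q).re)
        = c00.re + c11.re + m₁ * (c01.re + c10.re) + 2 * m₂ * q.re := by
      simp [Complex.add_re, Complex.mul_re]
    rw [goal']
    nlinarith [mul_nonneg (by linarith : (0:ℝ) ≤ 1 + m₁) hp',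
      mul_nonneg (by linarith : (0:ℝ) ≤ 1 - m₁) hm', mul_nonneg hm₂ hq]
  · have hk : ∀ j, ∑ x, H j x * ψ₀ x = 0 := fun j => by
      simpa [mulVec, dotProduct] using congrFun hker j
    funext p
    obtain ⟨i, j⟩ := p
    show (∑ p' : Fin 2 × Fin n, _ * _) = 0
    fin_cases i <;>
    · simp only [mulVec, dotProduct, Fintype.sum_prod_type, Fin.sum_univ_two,
        Matrix.add_apply, Matrix.smul_apply, kroneckerMap_apply, Matrix.one_apply,
        Matrix.sub_apply, Matrix.cons_val', Matrix.cons_val_zero, Matrix.cons_val_one,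
        Matrix.head_cons, Matrix.empty_val', Matrix.cons_val_fin_one, Matrix.head_fin_const,
        smul_eq_mul, Matrix.of_apply]
      norm_num
      simp [mul_assoc, ← Finset.mul_sum, hk]
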